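/- Let S and m be positive natural numbers with m ∣ S, and let ξ be a real number with 0 < ξ < 1. Then ∑_{t = 0}^{S/m} [ if (t : ℝ) ≥ (1 + ξ)·S/m² then (S/m choose t) · ((S − S/m) choose (S/m − t)) else 0 ] ≤ exp(−2·ξ²·S/m³) · (S choose S/m), where (· choose ·) denotes the binomial coefficient and exp is the real exponential. -/

import Mathlib

open Finset




private lemma bern_aux (P D : ℝ) (hP : 0 ≤ P) (hD : 0 ≤ D) :
    ∀ j : ℕ, P ^ (j + 1) + ((j : ℝ) + 1) * D * P ^ j ≤ (P + D) ^ (j + 1) := by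
  intro j
  induction j with
  | zero => simp
  | succ j ih =>
      have hPD : 0 ≤ P + D := by linarith
      have h2 : (P + D) * (P ^ (j + 1) + ((j : ℝ) + 1) * D * P ^ j) ≤ (P + D) ^ (j + 2) := by
        calc (P + D) * (P ^ (j + 1) + ((j : ℝ) + 1) * D * P ^ j)
            ≤ (P + D) * (P + D) ^ (j + 1) := mul_le_mul_of_nonneg_left ih hPD
          _ = (P + D) ^ (j + 2) := by ring
      have hpj : 0 ≤ P ^ j := pow_nonneg hP j
      have hj : (0:ℝ) ≤ (j:ℝ) + 1 := by positivity
      have hexp : (P + D) * (P ^ (j + 1) + ((j : ℝ) + 1) * D * P ^ j)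
          = P ^ (j + 1 + 1) + ((j : ℝ) + 1 + 1) * D * P ^ (j + 1)
            + ((j : ℝ) + 1) * D ^ 2 * P ^ j := by ring
      have hnn : 0 ≤ ((j : ℝ) + 1) * D ^ 2 * P ^ j := by positivity
      push_cast
      linarith

private lemma choose_split (K n : ℕ) (g : ℕ → ℝ) :
    ∑ k ∈ range (n + 1), (Nat.choose (K + 1) k : ℝ) * g k
      = ∑ k ∈ range (n + 1), (Nat.choose K k : ℝ) * g k
        + ∑ k ∈ range n, (Nat.choose K k : ℝ) * g (k + 1) := by
  rw [Finset.sum_range_succ' (fun k => (Nat.choose (K + 1) k : ℝ) * g k) n,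
      Finset.sum_range_succ' (fun k => (Nat.choose K k : ℝ) * g k) n]
  simp only [Nat.choose_succ_succ, Nat.choose_zero_right, Nat.cast_add, Nat.cast_one, add_mul]
  rw [Finset.sum_add_distrib]
  ring

private lemma core_step (x u r d v a b S1 S2 : ℝ) (j : ℕ)
    (hx : 1 ≤ x) (hu : 0 ≤ u) (hr : 0 < r) (hd : 0 ≤ d)
    (ha : 0 ≤ a) (hb : 0 ≤ b)
    (IH1 : r ^ (j + 1) * S1 ≤ a * u ^ (j + 1))
    (IH2 : r ^ j * S2 ≤ b * u ^ j)
    (rel1 : x * (r + 1) * r = u * (r + 1) + (r + 1) * d)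
    (rel2 : v * r = u * (r + 1) + d)
    (hid : (r + 1) * b = ((j : ℝ) + 1) * (a + b)) :
    (r + 1) ^ (j + 1) * (S1 + x * S2) ≤ (a + b) * v ^ (j + 1) := by
  have hx0 : (0:ℝ) < x := lt_of_lt_of_le one_pos hx
  have hr1 : (0:ℝ) < r + 1 := by linarith
  have hP0 : 0 ≤ u * (r + 1) := mul_nonneg hu hr1.le
  refine le_of_mul_le_mul_left ?_ (pow_pos hr (j + 1))
  calc r ^ (j + 1) * ((r + 1) ^ (j + 1) * (S1 + x * S2))
      = (r + 1) ^ (j + 1) * (r ^ (j + 1) * S1)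
        + (x * (r + 1) ^ (j + 1) * r) * (r ^ j * S2) := by ring
    _ ≤ (r + 1) ^ (j + 1) * (a * u ^ (j + 1))
        + (x * (r + 1) ^ (j + 1) * r) * (b * u ^ j) := by
        apply add_le_add
        · exact mul_le_mul_of_nonneg_left IH1 (by positivity)
        · exact mul_le_mul_of_nonneg_left IH2 (by positivity)
    _ = a * (u * (r + 1)) ^ (j + 1) + b * ((u * (r + 1)) + (r + 1) * d) * (u * (r + 1)) ^ j := by
        rw [mul_pow, mul_pow]
        linear_combination (b * u ^ j * (r + 1) ^ j) * rel1
    _ = (a + b) * ((u * (r + 1)) ^ (j + 1) + ((j : ℝ) + 1) * d * (u * (r + 1)) ^ j) := by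
        linear_combination (d * (u * (r + 1)) ^ j) * hid
    _ ≤ (a + b) * ((u * (r + 1)) + d) ^ (j + 1) :=
        mul_le_mul_of_nonneg_left (bern_aux _ _ hP0 hd j) (by positivity)
    _ = r ^ (j + 1) * ((a + b) * v ^ (j + 1)) := by
        rw [show u * (r + 1) + d = v * r by linarith [rel2], mul_pow]
        ring

private lemma pgf_bound (x : ℝ) (hx : 1 ≤ x) (M : ℕ) :
    ∀ K n : ℕ,
      ((K + M : ℕ) : ℝ) ^ n *
          ∑ k ∈ range (n + 1), (Nat.choose K k : ℝ) * (Nat.choose M (n - k) : ℝ) * x ^ k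
        ≤ (Nat.choose (K + M) n : ℝ) * ((M : ℝ) + (K : ℝ) * x) ^ n := by
  have hx0 : (0:ℝ) < x := lt_of_lt_of_le one_pos hx
  intro K
  induction K with
  | zero =>
      intro n
      have hsum : ∑ k ∈ range (n + 1), (Nat.choose 0 k : ℝ) * (Nat.choose M (n - k) : ℝ) * x ^ k
          = (Nat.choose M n : ℝ) := by
        rw [Finset.sum_eq_single 0]
        · simp
        · intro k _ hk
          obtain ⟨k', rfl⟩ := Nat.exists_eq_succ_of_ne_zero hk
          simp
        · intro h; exact absurd (Finset.mem_range.2 (Nat.succ_pos n)) h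
      rw [hsum]
      simp only [Nat.zero_add, Nat.cast_zero, zero_mul, add_zero]
      exact le_of_eq (mul_comm _ _)
  | succ K ih =>
      intro n
      match n with
      | 0 => simp
      | Nat.succ j =>
        have hsplit :
            ∑ k ∈ range (j + 1 + 1),
                (Nat.choose (K + 1) k : ℝ) * (Nat.choose M (j + 1 - k) : ℝ) * x ^ k
              = (∑ k ∈ range (j + 1 + 1),
                  (Nat.choose K k : ℝ) * (Nat.choose M (j + 1 - k) : ℝ) * x ^ k)
                + x * ∑ k ∈ range (j + 1),
                    (Nat.choose K k : ℝ) * (Nat.choose M (j - k) : ℝ) * x ^ k := by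
          have h := choose_split K (j + 1) (fun k => (Nat.choose M (j + 1 - k) : ℝ) * x ^ k)
          simp only [mul_assoc] at h ⊢
          rw [h]
          congr 1
          rw [Finset.mul_sum]
          apply Finset.sum_congr rfl
          intro k _
          simp only [Nat.succ_sub_succ]
          ring
        rw [hsplit]
        have IH1 := ih (j + 1)
        have IH2 := ih j
        set S1 : ℝ := ∑ k ∈ range (j + 1 + 1),
            (Nat.choose K k : ℝ) * (Nat.choose M (j + 1 - k) : ℝ) * x ^ k with hS1
        set S2 : ℝ := ∑ k ∈ range (j + 1),
            (Nat.choose K k : ℝ) * (Nat.choose M (j - k) : ℝ) * x ^ k with hS2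
        set a : ℝ := (Nat.choose (K + M) (j + 1) : ℝ) with ha
        set b : ℝ := (Nat.choose (K + M) j : ℝ) with hb
        have ha0 : 0 ≤ a := Nat.cast_nonneg _
        have hb0 : 0 ≤ b := Nat.cast_nonneg _
        have hcast2 : (Nat.choose (K + 1 + M) (j + 1) : ℝ) = a + b := by
          have he : K + 1 + M = (K + M) + 1 := by omega
          rw [he, Nat.choose_succ_succ]
          push_cast [ha, hb]; ring
        have hid : ((K : ℝ) + (M : ℝ) + 1) * b = ((j : ℝ) + 1) * (a + b) := by
          have hnat : (K + M + 1) * Nat.choose (K + M) j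
              = Nat.choose (K + M + 1) (j + 1) * (j + 1) := by
            simpa [Nat.succ_eq_add_one] using Nat.add_one_mul_choose_eq (K + M) j
          have hc : (Nat.choose (K + M + 1) (j + 1) : ℝ) = a + b := by
            rw [Nat.choose_succ_succ]; push_cast [ha, hb]; ring
          have hcast := congrArg (fun t : ℕ => (t : ℝ)) hnat
          push_cast at hcast
          rw [hc] at hcast
          rw [← hb] at hcast
          linarith
        rw [hcast2]
        push_cast at IH1 IH2 ⊢
        rcases Nat.eq_zero_or_pos (K + M) with hKM | hKM
        · -- K = 0 and M = 0
          have hK : K = 0 := by omega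
          have hM : M = 0 := by omega
          subst hK; subst hM
          have hS1z : S1 = 0 := by
            rw [hS1]
            apply Finset.sum_eq_zero
            intro k hk
            rcases k with _ | k' <;> simp
          have hS2v : S2 = b := by
            rw [hS2, hb]
            rw [Finset.sum_eq_single 0]
            · simp
            · intro k _ hk
              obtain ⟨k', rfl⟩ := Nat.exists_eq_succ_of_ne_zero hk
              simp
            · intro h; exact absurd (Finset.mem_range.2 (Nat.succ_pos j)) h
          rw [hS1z, hS2v]
          rcases Nat.eq_zero_or_pos j with hj | hj
          · subst hj
            have hbv : b = 1 := by rw [hb]; norm_num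
            have hav : a = 0 := by rw [ha]; norm_num
            rw [hbv, hav]
            norm_num
          · have hbv : b = 0 := by
              rw [hb]
              have h0 : Nat.choose 0 j = 0 := Nat.choose_eq_zero_of_lt hj
              simp [h0]
            rw [hbv]
            simp
            positivity
        · have hr : (0:ℝ) < (K : ℝ) + (M : ℝ) := by
            have h1 : (0:ℝ) < ((K + M : ℕ) : ℝ) := by exact_mod_cast hKM
            push_cast at h1; linarith
          have hgoal := core_step x ((M : ℝ) + (K : ℝ) * x) ((K : ℝ) + (M : ℝ))
            ((M : ℝ) * (x - 1)) ((M : ℝ) + ((K : ℝ) + 1) * x) a b S1 S2 j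
            hx (by positivity) hr (mul_nonneg (Nat.cast_nonneg _) (by linarith))
            ha0 hb0 IH1 IH2 (by ring) (by ring) hid
          calc ((K : ℝ) + 1 + (M : ℝ)) ^ (j + 1) * (S1 + x * S2)
              = ((K : ℝ) + (M : ℝ) + 1) ^ (j + 1) * (S1 + x * S2) := by ring_nf
            _ ≤ (a + b) * ((M : ℝ) + ((K : ℝ) + 1) * x) ^ (j + 1) := hgoal

private lemma hoeff_bernoulli (p : ℝ) (hp0 : 0 ≤ p) (hp1 : p ≤ 1) (y : ℝ) (hy : 0 ≤ y) :
    1 - p + p * Real.exp y ≤ Real.exp (p * y + y ^ 2 / 8) := by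
  have hG : ∀ z : ℝ, 0 < 1 - p + p * Real.exp z := by
    intro z
    rcases lt_or_eq_of_le hp1 with h | h
    · have := mul_nonneg hp0 (Real.exp_pos z).le
      linarith
    · rw [h]; simpa using Real.exp_pos z
  have hGd : ∀ z : ℝ, HasDerivAt (fun w : ℝ => 1 - p + p * Real.exp w) (p * Real.exp z) z := by
    intro z
    simpa using ((Real.hasDerivAt_exp z).const_mul p).const_add (1 - p)
  -- F' is the derivative of F below
  set F' : ℝ → ℝ := fun z => p + z / 4 - p * Real.exp z / (1 - p + p * Real.exp z) with hF'def
  have hFd : ∀ z : ℝ, HasDerivAt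
      (fun w : ℝ => p * w + w ^ 2 / 8 - Real.log (1 - p + p * Real.exp w)) (F' z) z := by
    intro z
    have h1 : HasDerivAt (fun w : ℝ => p * w) p z := by
      simpa using (hasDerivAt_id z).const_mul p
    have h2 : HasDerivAt (fun w : ℝ => w ^ 2 / 8) (z / 4) z := by
      have := (hasDerivAt_pow 2 z).div_const 8
      simpa using this.congr_deriv (by ring)
    have h3 : HasDerivAt (fun w : ℝ => Real.log (1 - p + p * Real.exp w))
        (p * Real.exp z / (1 - p + p * Real.exp z)) z :=
      (hGd z).log (ne_of_gt (hG z))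
    exact (h1.add h2).sub h3
  have hF'd : ∀ z : ℝ, HasDerivAt F'
      (1 / 4 - p * Real.exp z * (1 - p) / (1 - p + p * Real.exp z) ^ 2) z := by
    intro z
    have h1 : HasDerivAt (fun w : ℝ => p + w / 4) (1 / 4) z := by
      simpa using ((hasDerivAt_id z).div_const 4).const_add p
    have h2 : HasDerivAt (fun w : ℝ => p * Real.exp w / (1 - p + p * Real.exp w))
        ((p * Real.exp z * (1 - p + p * Real.exp z)
          - p * Real.exp z * (p * Real.exp z)) / (1 - p + p * Real.exp z) ^ 2) z :=
      ((Real.hasDerivAt_exp z).const_mul p).div (hGd z) (ne_of_gt (hG z))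
    have h := h1.sub h2
    have heq : 1 / 4 - p * Real.exp z * (1 - p) / (1 - p + p * Real.exp z) ^ 2
        = 1 / 4 - (p * Real.exp z * (1 - p + p * Real.exp z)
          - p * Real.exp z * (p * Real.exp z)) / (1 - p + p * Real.exp z) ^ 2 := by
      congr 1
      congr 1
      ring
    rw [heq]
    exact h
  have hF'nonneg : ∀ z : ℝ, 0 ≤ 1 / 4 - p * Real.exp z * (1 - p) / (1 - p + p * Real.exp z) ^ 2 := by
    intro z
    rw [sub_nonneg, div_le_iff₀ (pow_pos (hG z) 2)]
    nlinarith [sq_nonneg (1 - p - p * Real.exp z)]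
  have hmonoF' : Monotone F' := by
    apply monotone_of_deriv_nonneg
    · exact fun z => (hF'd z).differentiableAt
    · intro z; rw [(hF'd z).deriv]; exact hF'nonneg z
  have hF'0 : F' 0 = 0 := by
    rw [hF'def]
    simp only [Real.exp_zero, mul_one]
    have : 1 - p + p = 1 := by ring
    rw [this]
    norm_num
  have hF'nn : ∀ z : ℝ, 0 ≤ z → 0 ≤ F' z := by
    intro z hz
    rw [← hF'0]
    exact hmonoF' hz
  have hmonoF : MonotoneOn
      (fun w : ℝ => p * w + w ^ 2 / 8 - Real.log (1 - p + p * Real.exp w)) (Set.Ici 0) := by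
    apply monotoneOn_of_deriv_nonneg (convex_Ici 0)
    · exact (Differentiable.continuous (fun z => (hFd z).differentiableAt)).continuousOn
    · exact fun z _ => ((hFd z).differentiableAt).differentiableWithinAt
    · intro z hz
      rw [(hFd z).deriv]
      refine hF'nn z ?_
      rw [interior_Ici] at hz
      exact (Set.mem_Ioi.mp hz).le
  have hF0 : (fun w : ℝ => p * w + w ^ 2 / 8 - Real.log (1 - p + p * Real.exp w)) 0 = 0 := by
    simp only [Real.exp_zero, mul_one, mul_zero]
    have : 1 - p + p = 1 := by ring
    rw [this]
    simp
  have hFy : 0 ≤ p * y + y ^ 2 / 8 - Real.log (1 - p + p * Real.exp y) := by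
    have := hmonoF (Set.self_mem_Ici) (Set.mem_Ici.mpr hy) hy
    rw [hF0] at this
    exact this
  have hlog : Real.log (1 - p + p * Real.exp y) ≤ p * y + y ^ 2 / 8 := by linarith
  exact (Real.log_le_iff_le_exp (hG y)).mp hlog

open Nat in
theorem overlap_concentration
    (S m : ℕ) (hS : 0 < S) (hm : 0 < m) (hdvd : m ∣ S)
    (ξ : ℝ) (hξ0 : 0 < ξ) (hξ1 : ξ < 1) :
    ∑ t ∈ Finset.range (S / m + 1),
      (if (1 + ξ) * (S : ℝ) / (m : ℝ) ^ 2 ≤ (t : ℝ) then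
        ((Nat.choose (S / m) t * Nat.choose (S - S / m) (S / m - t) : ℕ) : ℝ)
      else 0) ≤
      Real.exp (-2 * ξ ^ 2 * (S : ℝ) / (m : ℝ) ^ 3) * (Nat.choose S (S / m) : ℝ) := by
  set n := S / m with hn
  have hmn : m * n = S := Nat.mul_div_cancel' hdvd
  have hnS : n ≤ S := Nat.div_le_self S m
  have hmR : (0:ℝ) < (m : ℝ) := by exact_mod_cast hm
  have hSR : (0:ℝ) < (S : ℝ) := by exact_mod_cast hS
  have hSn : (S : ℝ) = (m : ℝ) * (n : ℝ) := by exact_mod_cast hmn.symm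
  set l : ℝ := 4 * ξ / (m : ℝ) with hl
  have hl0 : 0 ≤ l := by positivity
  set x : ℝ := Real.exp l with hxdef
  have hx1 : 1 ≤ x := Real.one_le_exp hl0
  have hx0 : 0 < x := Real.exp_pos l
  set τ : ℝ := (1 + ξ) * (S : ℝ) / (m : ℝ) ^ 2 with hτ
  -- Step 1: Chernoff domination of the indicator
  have step1 : ∑ t ∈ Finset.range (n + 1),
      (if (1 + ξ) * (S : ℝ) / (m : ℝ) ^ 2 ≤ (t : ℝ) then
        ((Nat.choose n t * Nat.choose (S - n) (n - t) : ℕ) : ℝ) else 0)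
      ≤ Real.exp (-(l * τ)) *
        ∑ t ∈ Finset.range (n + 1),
          (Nat.choose n t : ℝ) * (Nat.choose (S - n) (n - t) : ℝ) * x ^ t := by
    rw [Finset.mul_sum]
    apply Finset.sum_le_sum
    intro t _
    by_cases hc : (1 + ξ) * (S : ℝ) / (m : ℝ) ^ 2 ≤ (t : ℝ)
    · rw [if_pos hc]
      have hT : (0:ℝ) ≤ (Nat.choose n t : ℝ) * (Nat.choose (S - n) (n - t) : ℝ) := by positivity
      have hexp : Real.exp (-(l * τ)) * x ^ t = Real.exp (l * t - l * τ) := by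
        rw [hxdef, ← Real.exp_nat_mul, ← Real.exp_add]
        congr 1
        ring
      have h1 : (1:ℝ) ≤ Real.exp (l * t - l * τ) := by
        apply Real.one_le_exp
        have : l * τ ≤ l * t := mul_le_mul_of_nonneg_left hc hl0
        linarith
      calc ((Nat.choose n t * Nat.choose (S - n) (n - t) : ℕ) : ℝ)
          = (Nat.choose n t : ℝ) * (Nat.choose (S - n) (n - t) : ℝ) * 1 := by push_cast; ring
        _ ≤ (Nat.choose n t : ℝ) * (Nat.choose (S - n) (n - t) : ℝ)
            * Real.exp (l * t - l * τ) := by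
            exact mul_le_mul_of_nonneg_left h1 hT
        _ = Real.exp (-(l * τ)) * ((Nat.choose n t : ℝ) * (Nat.choose (S - n) (n - t) : ℝ)
            * x ^ t) := by rw [← hexp]; ring
    · rw [if_neg hc]
      positivity
  -- Step 2: pgf bound plus Hoeffding's lemma
  have hKM : n + (S - n) = S := Nat.add_sub_cancel' hnS
  have key := pgf_bound x hx1 (S - n) n n
  rw [hKM] at key
  have hcastSn : ((S - n : ℕ) : ℝ) = (S : ℝ) - (n : ℝ) := Nat.cast_sub hnS
  have hhoeff := hoeff_bernoulli (1 / (m : ℝ)) (by positivity)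
    (by rw [div_le_one hmR]; exact_mod_cast hm) l hl0
  have hUbound : ((S - n : ℕ) : ℝ) + (n : ℝ) * x ≤ (S : ℝ) * Real.exp (l / (m : ℝ) + l ^ 2 / 8) := by
    rw [hcastSn]
    have h2 : (S : ℝ) * (1 - 1 / (m : ℝ) + 1 / (m : ℝ) * Real.exp l)
        ≤ (S : ℝ) * Real.exp (1 / (m : ℝ) * l + l ^ 2 / 8) :=
      mul_le_mul_of_nonneg_left hhoeff hSR.le
    have h3 : (S : ℝ) * (1 - 1 / (m : ℝ) + 1 / (m : ℝ) * Real.exp l)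
        = (S : ℝ) - (n : ℝ) + (n : ℝ) * x := by
      rw [hxdef]
      field_simp
      linear_combination (Real.exp l - 1) * hSn
    rw [show l / (m : ℝ) + l ^ 2 / 8 = 1 / (m : ℝ) * l + l ^ 2 / 8 by ring]
    linarith
  have hU0 : (0:ℝ) ≤ ((S - n : ℕ) : ℝ) + (n : ℝ) * x := by positivity
  have step2 : ∑ t ∈ Finset.range (n + 1),
      (Nat.choose n t : ℝ) * (Nat.choose (S - n) (n - t) : ℝ) * x ^ t
      ≤ (Nat.choose S n : ℝ) * Real.exp ((n : ℝ) * (l / (m : ℝ) + l ^ 2 / 8)) := by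
    have hSpow : (0:ℝ) < (S : ℝ) ^ n := by positivity
    refine le_of_mul_le_mul_left ?_ hSpow
    calc (S : ℝ) ^ n * ∑ t ∈ Finset.range (n + 1),
          (Nat.choose n t : ℝ) * (Nat.choose (S - n) (n - t) : ℝ) * x ^ t
        ≤ (Nat.choose S n : ℝ) * (((S - n : ℕ) : ℝ) + (n : ℝ) * x) ^ n := by
          have := key
          push_cast at this ⊢
          convert this using 2
      _ ≤ (Nat.choose S n : ℝ) * ((S : ℝ) * Real.exp (l / (m : ℝ) + l ^ 2 / 8)) ^ n := by
          apply mul_le_mul_of_nonneg_left _ (Nat.cast_nonneg _)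
          exact pow_le_pow_left₀ hU0 hUbound n
      _ = (S : ℝ) ^ n * ((Nat.choose S n : ℝ)
            * Real.exp ((n : ℝ) * (l / (m : ℝ) + l ^ 2 / 8))) := by
          rw [mul_pow, ← Real.exp_nat_mul]
          ring
  -- combine
  calc ∑ t ∈ Finset.range (n + 1),
      (if (1 + ξ) * (S : ℝ) / (m : ℝ) ^ 2 ≤ (t : ℝ) then
        ((Nat.choose n t * Nat.choose (S - n) (n - t) : ℕ) : ℝ) else 0)
      ≤ Real.exp (-(l * τ)) *
        ∑ t ∈ Finset.range (n + 1),
          (Nat.choose n t : ℝ) * (Nat.choose (S - n) (n - t) : ℝ) * x ^ t := step1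
    _ ≤ Real.exp (-(l * τ)) *
        ((Nat.choose S n : ℝ) * Real.exp ((n : ℝ) * (l / (m : ℝ) + l ^ 2 / 8))) :=
        mul_le_mul_of_nonneg_left step2 (Real.exp_pos _).le
    _ = Real.exp (-(l * τ) + (n : ℝ) * (l / (m : ℝ) + l ^ 2 / 8)) * (Nat.choose S n : ℝ) := by
        rw [Real.exp_add]; ring
    _ = Real.exp (-2 * ξ ^ 2 * (S : ℝ) / (m : ℝ) ^ 3) * (Nat.choose S n : ℝ) := by
        congr 1
        rw [hl, hτ, hSn]
        field_simp
        ring
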